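/- Generalized Joint Responsibility (semantic form): for every game, every play (δ,ω), pairwise disjoint coalitions D₁,…,Dₙ, reals t₁,…,tₙ ≥ 0, and formulas χ₁,…,χₙ: if for each i there exists a play satisfying B^{tᵢ}_{Dᵢ} χᵢ, and (δ,ω) ⊨ χ₁ ∨ … ∨ χₙ, then (δ,ω) ⊨ B^{t₁+…+tₙ}_{D₁∪…∪Dₙ} (χ₁ ∨ … ∨ χₙ). -/

import Mathlib

/-- Formulas of the logic of blameworthiness with sacrifice over agent type `A`:
propositional variables, negation, implication, the universal modality `N`,
and the blameworthiness modality `B s C φ` ("coalition `C` is blameable for `φ`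
with degree (sacrifice) `s`"). -/
inductive Formula (A : Type) : Type where
  | var : ℕ → Formula A
  | neg : Formula A → Formula A
  | impl : Formula A → Formula A → Formula A
  | N : Formula A → Formula A
  | B : ℝ → Finset A → Formula A → Formula A

namespace Formula

/-- Disjunction, defined as usual. -/
def or {A : Type} (φ ψ : Formula A) : Formula A := (φ.neg).impl ψ

/-- Conjunction, defined as usual. -/
def and {A : Type} (φ ψ : Formula A) : Formula A := (φ.impl ψ.neg).neg

/-- The modality `N̄ φ := ¬ N ¬ φ` ("φ holds at some play"). -/
def nbar {A : Type} (φ : Formula A) : Formula A := (Formula.N φ.neg).neg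

/-- A contradictory formula (used as the empty disjunction). -/
def fbot {A : Type} : Formula A := ((Formula.var 0).impl (Formula.var 0)).neg

end Formula

/-- Finite disjunction `χ₁ ∨ ⋯ ∨ χₙ` of a list of formulas. -/
def bigOr {A : Type} : List (Formula A) → Formula A
  | [] => Formula.fbot
  | φ :: l => l.foldl Formula.or φ

/-- A game `(Δ, ‖·‖, d₀, Ω, P, π)`: a nonempty set of actions `Δ` with
nonnegative costs and a zero-cost action `d₀`, a set of outcomes `Ω`,
a set of plays `P` (pairs of a complete action profile and an outcome),
and a valuation `π` of propositional variables by sets of plays. -/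
structure Game (A : Type) where
  Δ : Type
  Ω : Type
  cost : Δ → ℝ
  cost_nonneg : ∀ d : Δ, 0 ≤ cost d
  d0 : Δ
  cost_d0 : cost d0 = 0
  P : Set ((A → Δ) × Ω)
  π : ℕ → Set ((A → Δ) × Ω)

/-- Satisfaction relation `(δ,ω) ⊨ φ`.  In particular
`(δ,ω) ⊨ B s C φ` iff `(δ,ω) ⊨ φ` and there is an action profile `γ` of the
coalition `C` of total cost `∑ a ∈ C, ‖γ(a)‖ ≤ s` such that every play
agreeing with `γ` on `C` falsifies `φ`. -/
def Sat {A : Type} (G : Game A) : ((A → G.Δ) × G.Ω) → Formula A → Prop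
  | p, .var n => p ∈ G.π n
  | p, .neg φ => ¬ Sat G p φ
  | p, .impl φ ψ => Sat G p φ → Sat G p ψ
  | _, .N φ => ∀ q ∈ G.P, Sat G q φ
  | p, .B s C φ => Sat G p φ ∧ ∃ γ : A → G.Δ,
      (∑ a ∈ C, G.cost (γ a)) ≤ s ∧
      ∀ q ∈ G.P, (∀ a ∈ C, q.1 a = γ a) → ¬ Sat G q φ

/-- Generalized Joint Responsibility (semantic form): for pairwise
disjoint coalitions `D₁,…,Dₙ`, reals `t₁,…,tₙ ≥ 0` and formulas `χ₁,…,χₙ`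
(given as a list `l` of triples), if each `B^{tᵢ}_{Dᵢ} χᵢ` holds at some play
and `(δ,ω) ⊨ χ₁ ∨ ⋯ ∨ χₙ`, then
`(δ,ω) ⊨ B^{t₁+⋯+tₙ}_{D₁∪⋯∪Dₙ}(χ₁ ∨ ⋯ ∨ χₙ)`. -/
lemma sat_bigOr_exists {A : Type} (G : Game A) (q : (A → G.Δ) × G.Ω) :
    ∀ (L : List (Formula A)), Sat G q (bigOr L) → ∃ φ ∈ L, Sat G q φ := by
  have key : ∀ (L : List (Formula A)) (φ : Formula A),
      Sat G q (L.foldl Formula.or φ) → Sat G q φ ∨ ∃ ψ ∈ L, Sat G q ψ := by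
    intro L
    induction L with
    | nil => intro φ h; exact Or.inl h
    | cons ψ L ih =>
      intro φ h
      rcases ih _ h with h' | ⟨χ, hχ, hs⟩
      · simp only [Formula.or, Sat] at h'
        by_cases hφ : Sat G q φ
        · exact Or.inl hφ
        · exact Or.inr ⟨ψ, by simp, h' hφ⟩
      · exact Or.inr ⟨χ, by simp [hχ], hs⟩
  intro L h
  cases L with
  | nil =>
    exfalso
    simp only [bigOr, Formula.fbot, Sat] at h
    exact h (fun h => h)
  | cons φ L =>
    rcases key L φ h with h | ⟨ψ, hψ, hs⟩
    · exact ⟨φ, by simp, h⟩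
    · exact ⟨ψ, by simp [hψ], hs⟩

lemma mem_foldrU {A : Type} [DecidableEq A] (l : List (ℝ × Finset A × Formula A)) (a : A) :
    a ∈ (l.map fun x => x.2.1).foldr (· ∪ ·) ∅ ↔ ∃ x ∈ l, a ∈ x.2.1 := by
  induction l with
  | nil => simp
  | cons x l ih => simp [ih]

lemma glue_profiles {A : Type} [DecidableEq A] (G : Game A)
    (l : List (ℝ × Finset A × Formula A))
    (hdisj : l.Pairwise fun x y => Disjoint x.2.1 y.2.1)
    (hB : ∀ x ∈ l, ∃ q ∈ G.P, Sat G q (Formula.B x.1 x.2.1 x.2.2)) :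
    ∃ γ : A → G.Δ,
      (∑ a ∈ (l.map fun x => x.2.1).foldr (· ∪ ·) ∅, G.cost (γ a)) ≤
        (l.map fun x => x.1).sum ∧
      ∀ q ∈ G.P, (∀ a ∈ (l.map fun x => x.2.1).foldr (· ∪ ·) ∅, q.1 a = γ a) →
        ∀ x ∈ l, ¬ Sat G q x.2.2 := by
  induction l with
  | nil => exact ⟨fun _ => G.d0, by simp, by simp⟩
  | cons x l ih =>
    rw [List.pairwise_cons] at hdisj
    obtain ⟨hx, hl⟩ := hdisj
    obtain ⟨γl, hcl, hfl⟩ := ih hl (fun y hy => hB y (List.mem_cons_of_mem _ hy))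
    obtain ⟨q, hq, hsatB⟩ := hB x List.mem_cons_self
    obtain ⟨-, γx, hcx, hfx⟩ : Sat G q x.2.2 ∧ ∃ γ : A → G.Δ,
        (∑ a ∈ x.2.1, G.cost (γ a)) ≤ x.1 ∧
        ∀ r ∈ G.P, (∀ a ∈ x.2.1, r.1 a = γ a) → ¬ Sat G r x.2.2 := hsatB
    set U := (l.map fun y => y.2.1).foldr (· ∪ ·) ∅ with hU
    have hdU : Disjoint x.2.1 U := by
      rw [Finset.disjoint_left]
      intro a ha haU
      obtain ⟨y, hy, hay⟩ := (mem_foldrU l a).mp haU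
      exact (hx y hy).forall_ne_finset ha hay rfl
    refine ⟨fun a => if a ∈ x.2.1 then γx a else γl a, ?_, ?_⟩
    · simp only [List.map_cons, List.foldr_cons, List.sum_cons]
      rw [Finset.sum_union hdU]
      have h1 : (∑ a ∈ x.2.1, G.cost (if a ∈ x.2.1 then γx a else γl a)) =
          ∑ a ∈ x.2.1, G.cost (γx a) :=
        Finset.sum_congr rfl (fun a ha => by rw [if_pos ha])
      have h2 : (∑ a ∈ U, G.cost (if a ∈ x.2.1 then γx a else γl a)) =
          ∑ a ∈ U, G.cost (γl a) :=
        Finset.sum_congr rfl (fun a ha => by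
          rw [if_neg (Finset.disjoint_right.mp hdU ha)])
      rw [h1, h2]
      exact add_le_add hcx hcl
    · intro r hr hag y hy
      simp only [List.map_cons, List.foldr_cons] at hag
      rcases List.mem_cons.mp hy with rfl | hy
      · refine hfx r hr (fun a ha => ?_)
        rw [hag a (Finset.mem_union_left _ ha), if_pos ha]
      · refine hfl r hr (fun a ha => ?_) y hy
        rw [hag a (Finset.mem_union_right _ ha),
          if_neg (Finset.disjoint_right.mp hdU ha)]

theorem generalized_joint_responsibility_valid {A : Type} [DecidableEq A]
    (G : Game A) (p : (A → G.Δ) × G.Ω) (hp : p ∈ G.P)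
    (l : List (ℝ × Finset A × Formula A))
    (ht : ∀ x ∈ l, 0 ≤ x.1)
    (hdisj : l.Pairwise fun x y => Disjoint x.2.1 y.2.1)
    (hB : ∀ x ∈ l, ∃ q ∈ G.P, Sat G q (Formula.B x.1 x.2.1 x.2.2))
    (hor : Sat G p (bigOr (l.map fun x => x.2.2))) :
    Sat G p (Formula.B ((l.map fun x => x.1).sum)
      ((l.map fun x => x.2.1).foldr (· ∪ ·) ∅)
      (bigOr (l.map fun x => x.2.2))) := by
  obtain ⟨γ, hc, hf⟩ := glue_profiles G l hdisj hB
  refine ⟨hor, γ, hc, ?_⟩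
  intro q hq hag hsat
  obtain ⟨φ, hφ, hs⟩ := sat_bigOr_exists G q _ hsat
  obtain ⟨x, hx, rfl⟩ := List.mem_map.mp hφ
  exact hf q hq hag x hx hs
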